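/- For every σ > 0 and every e ∈ ℝ, (1/(√2 σ)) · exp(−√2 |e| / σ) = ∫_{0}^{∞} (2πτ)^{−1/2} · exp(−e²/(2τ)) · σ^{−2} · exp(−τ/σ²) dτ. -/

import Mathlib

open MeasureTheory Real
open Set

set_option maxHeartbeats 1000000

-- integrability of exp(-u^2 - c^2/u^2) on Ioi 0
lemma intg1 (c : ℝ) : IntegrableOn (fun u : ℝ => Real.exp (-u^2 - c^2/u^2)) (Ioi 0) := by
  have hmeas : AEStronglyMeasurable (fun u : ℝ => Real.exp (-u^2 - c^2/u^2))
      (volume.restrict (Ioi (0:ℝ))) := by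
    apply ContinuousOn.aestronglyMeasurable _ measurableSet_Ioi
    apply ContinuousOn.rexp
    apply ContinuousOn.sub
    · exact (continuous_pow 2).continuousOn.neg
    · exact continuousOn_const.div (continuousOn_pow 2) (fun x hx => pow_ne_zero _ (ne_of_gt hx))
  have hint : IntegrableOn (fun u : ℝ => Real.exp (-1 * u^2)) (Ioi 0) :=
    (integrable_exp_neg_mul_sq one_pos).integrableOn
  refine Integrable.mono hint hmeas ?_
  filter_upwards [] with u
  rw [Real.norm_eq_abs, Real.norm_eq_abs, abs_of_pos (Real.exp_pos _), abs_of_pos (Real.exp_pos _)]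
  apply Real.exp_le_exp.2
  have : 0 ≤ c^2/u^2 := div_nonneg (sq_nonneg c) (sq_nonneg u)
  nlinarith

lemma intg2 (c : ℝ) (hc : 0 < c) :
    IntegrableOn (fun u : ℝ => c/u^2 * Real.exp (-u^2 - c^2/u^2)) (Ioi 0) := by
  have hmeas : AEStronglyMeasurable (fun u : ℝ => c/u^2 * Real.exp (-u^2 - c^2/u^2))
      (volume.restrict (Ioi (0:ℝ))) := by
    apply ContinuousOn.aestronglyMeasurable _ measurableSet_Ioi
    apply ContinuousOn.mul
    · exact continuousOn_const.div (continuousOn_pow 2) (fun x hx => pow_ne_zero _ (ne_of_gt hx))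
    · apply ContinuousOn.rexp
      exact (continuous_pow 2).continuousOn.neg.sub
        (continuousOn_const.div (continuousOn_pow 2) (fun x hx => pow_ne_zero _ (ne_of_gt hx)))
  have hint : IntegrableOn (fun u : ℝ => c⁻¹ * Real.exp (-1 * u^2)) (Ioi 0) :=
    ((integrable_exp_neg_mul_sq one_pos).const_mul _).integrableOn
  refine Integrable.mono hint hmeas ?_
  filter_upwards [ae_restrict_mem measurableSet_Ioi] with u hu
  rw [Real.norm_eq_abs, Real.norm_eq_abs]
  have hu2 : (0:ℝ) < u^2 := pow_pos hu 2
  have h1 : 0 ≤ c/u^2 * Real.exp (-u^2 - c^2/u^2) :=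
    mul_nonneg (div_nonneg hc.le hu2.le) (Real.exp_pos _).le
  rw [abs_of_nonneg h1, abs_of_nonneg (by positivity)]
  -- key: (c^2/u^2) * exp (-(c^2/u^2)) ≤ 1
  have hx : ∀ x : ℝ, x * Real.exp (-x) ≤ 1 := by
    intro x
    have := Real.add_one_le_exp x
    have h2 : x ≤ Real.exp x := by linarith
    calc x * Real.exp (-x) ≤ Real.exp x * Real.exp (-x) :=
          mul_le_mul_of_nonneg_right (by linarith) (Real.exp_pos _).le
      _ = 1 := by rw [← Real.exp_add]; simp
  have hkey := hx (c^2/u^2)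
  have : Real.exp (-u^2 - c^2/u^2) = Real.exp (-(c^2/u^2)) * Real.exp (-u^2) := by
    rw [← Real.exp_add]; ring_nf
  rw [this]
  have : c/u^2 * (Real.exp (-(c^2/u^2)) * Real.exp (-u^2))
      = c⁻¹ * ((c^2/u^2 * Real.exp (-(c^2/u^2))) * Real.exp (-u^2)) := by
    field_simp
  rw [this]
  have hle : c^2/u^2 * Real.exp (-(c^2/u^2)) * Real.exp (-u^2) ≤ 1 * Real.exp (-u^2) :=
    mul_le_mul_of_nonneg_right hkey (Real.exp_pos _).le
  calc c⁻¹ * (c^2/u^2 * Real.exp (-(c^2/u^2)) * Real.exp (-u^2))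
      ≤ c⁻¹ * (1 * Real.exp (-u^2)) :=
        mul_le_mul_of_nonneg_left hle (inv_nonneg.2 hc.le)
    _ = c⁻¹ * Real.exp (-1 * u^2) := by ring_nf

lemma sub1 (c : ℝ) (hc : 0 < c) :
    ∫ u in Ioi (0:ℝ), c/u^2 * Real.exp (-u^2 - c^2/u^2)
      = ∫ u in Ioi (0:ℝ), Real.exp (-u^2 - c^2/u^2) := by
  have himg : (fun u : ℝ => c/u) '' Ioi 0 = Ioi 0 := by
    ext y
    constructor
    · rintro ⟨u, hu, rfl⟩
      exact div_pos hc hu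
    · intro hy
      exact ⟨c/y, div_pos hc hy, by field_simp⟩
  have hder : ∀ u ∈ Ioi (0:ℝ), HasDerivWithinAt (fun u : ℝ => c/u) (-(c/u^2)) (Ioi 0) u := by
    intro u hu
    have : HasDerivAt (fun u : ℝ => c/u) (c * (-(u^2)⁻¹)) u := by
      simpa [div_eq_mul_inv] using (hasDerivAt_inv (ne_of_gt hu)).const_mul c
    have h2 : c * (-(u^2)⁻¹) = -(c/u^2) := by field_simp
    exact (h2 ▸ this).hasDerivWithinAt
  have hinj : InjOn (fun u : ℝ => c/u) (Ioi 0) := by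
    intro a ha b hb hab
    have ha' : a ≠ 0 := ne_of_gt ha
    have hb' : b ≠ 0 := ne_of_gt hb
    simp only at hab
    rw [div_eq_div_iff ha' hb'] at hab
    exact (mul_left_cancel₀ (ne_of_gt hc) hab).symm
  have := integral_image_eq_integral_abs_deriv_smul measurableSet_Ioi hder hinj
    (fun y => Real.exp (-y^2 - c^2/y^2))
  rw [himg] at this
  rw [this]
  apply setIntegral_congr_fun measurableSet_Ioi
  intro u hu
  have hu' : (0:ℝ) < u := hu
  have h1 : |(-(c/u^2))| = c/u^2 := by
    rw [abs_neg, abs_of_pos (div_pos hc (pow_pos hu' 2))]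
  simp only [smul_eq_mul]
  rw [h1]
  congr 1
  have : -(c/u)^2 - c^2/(c/u)^2 = -u^2 - c^2/u^2 := by
    field_simp
    ring
  rw [this]

lemma sub2 (c : ℝ) (hc : 0 < c) :
    Real.sqrt π = ∫ u in Ioi (0:ℝ), (1 + c/u^2) * Real.exp (-(u - c/u)^2) := by
  have himg : (fun u : ℝ => u - c/u) '' Ioi 0 = univ := by
    refine eq_univ_of_forall fun y => ?_
    set s := Real.sqrt (y^2 + 4*c) with hs
    have hs2 : s^2 = y^2 + 4*c := Real.sq_sqrt (by nlinarith)
    have hsy : |y| < s := by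
      nlinarith [abs_nonneg y, sq_abs y, Real.sqrt_nonneg (y^2+4*c), sq_abs y]
    have hu : 0 < (y + s)/2 := by
      have := neg_abs_le y
      have := le_abs_self y
      linarith
    refine ⟨(y+s)/2, hu, ?_⟩
    have hys : y + s ≠ 0 := by
      have := le_abs_self y
      have := neg_abs_le y
      intro h; nlinarith
    field_simp [hys]
    nlinarith
  have hder : ∀ u ∈ Ioi (0:ℝ), HasDerivWithinAt (fun u : ℝ => u - c/u) (1 + c/u^2) (Ioi 0) u := by
    intro u hu
    have h1 : HasDerivAt (fun u : ℝ => c/u) (c * (-(u^2)⁻¹)) u := by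
      simpa [div_eq_mul_inv] using (hasDerivAt_inv (ne_of_gt hu)).const_mul c
    have h2 : HasDerivAt (fun u : ℝ => u - c/u) (1 - c * (-(u^2)⁻¹)) u :=
      (hasDerivAt_id u).sub h1
    have h3 : 1 - c * (-(u^2)⁻¹) = 1 + c/u^2 := by ring
    exact (h3 ▸ h2).hasDerivWithinAt
  have hinj : InjOn (fun u : ℝ => u - c/u) (Ioi 0) := by
    have hmono : StrictMonoOn (fun u : ℝ => u - c/u) (Ioi 0) := by
      intro a ha b hb hab
      have : c/b < c/a := div_lt_div_of_pos_left hc (show (0:ℝ) < a from ha) hab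
      simp only
      have hab' : a < b := hab
      linarith
    exact hmono.injOn
  have key := integral_image_eq_integral_abs_deriv_smul measurableSet_Ioi hder hinj
    (fun y => Real.exp (-y^2))
  rw [himg] at key
  have hg : ∫ y in (univ : Set ℝ), Real.exp (-y^2) = Real.sqrt π := by
    rw [Measure.restrict_univ]
    simpa using integral_gaussian 1
  rw [← hg, key]
  apply setIntegral_congr_fun measurableSet_Ioi
  intro u hu
  have hu' : (0:ℝ) < u := hu
  have h1 : (0:ℝ) < 1 + c/u^2 := by positivity
  simp only [smul_eq_mul, abs_of_pos h1]

lemma key (c : ℝ) (hc : 0 ≤ c) :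
    ∫ u in Ioi (0:ℝ), Real.exp (-u^2 - c^2/u^2)
      = Real.sqrt π / 2 * Real.exp (-(2*c)) := by
  rcases eq_or_lt_of_le hc with rfl | hc'
  · simp only [ne_eq, OfNat.ofNat_ne_zero, not_false_eq_true, zero_pow, zero_div, sub_zero,
      mul_zero, neg_zero, Real.exp_zero, mul_one]
    have : ∀ u : ℝ, Real.exp (-u^2) = Real.exp (-1 * u^2) := by intro u; ring_nf
    simp_rw [this]
    rw [integral_gaussian_Ioi 1]
    norm_num
  · have hpt : EqOn (fun u : ℝ => (1 + c/u^2) * Real.exp (-(u - c/u)^2))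
        (fun u : ℝ => Real.exp (2*c) *
          (Real.exp (-u^2 - c^2/u^2) + c/u^2 * Real.exp (-u^2 - c^2/u^2))) (Ioi 0) := by
      intro u hu
      have hu' : u ≠ 0 := ne_of_gt (show (0:ℝ) < u from hu)
      have h : -(u - c/u)^2 = 2*c + (-u^2 - c^2/u^2) := by field_simp; ring
      simp only
      rw [h, Real.exp_add]; ring
    have h1 := sub2 c hc'
    rw [setIntegral_congr_fun measurableSet_Ioi hpt, MeasureTheory.integral_const_mul,
      integral_add (intg1 c) (intg2 c hc'), sub1 c hc'] at h1
    have hexp : (0:ℝ) < Real.exp (2*c) := Real.exp_pos _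
    rw [Real.exp_neg]
    have hh := mul_inv_cancel₀ hexp.ne'
    rw [h1]
    linear_combination (-(∫ u in Ioi (0:ℝ), Real.exp (-u^2 - c^2/u^2))) * hh

/-- Scale-mixture-of-normals representation of the Laplace density with variance `σ²`:
for every `σ > 0` and `e ∈ ℝ`,
`(1/(√2 σ)) exp(-√2 |e|/σ) = ∫_0^∞ (2πτ)^{-1/2} exp(-e²/(2τ)) σ⁻² exp(-τ/σ²) dτ`. -/
theorem laplace_scale_mixture (σ : ℝ) (hσ : 0 < σ) (e : ℝ) :
    1 / (Real.sqrt 2 * σ) * Real.exp (-(Real.sqrt 2 * |e|) / σ)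
      = ∫ τ in Set.Ioi (0 : ℝ),
          (Real.sqrt (2 * Real.pi * τ))⁻¹ * Real.exp (-e ^ 2 / (2 * τ)) *
            (σ ^ 2)⁻¹ * Real.exp (-τ / σ ^ 2) := by
  set c : ℝ := |e| / (Real.sqrt 2 * σ) with hcdef
  have hs2 : (0:ℝ) < Real.sqrt 2 := Real.sqrt_pos.2 (by norm_num)
  have hc : 0 ≤ c := div_nonneg (abs_nonneg e) (by positivity)
  have hc2 : c^2 = e^2 / (2 * σ^2) := by
    rw [hcdef, div_pow, mul_pow, Real.sq_sqrt (by norm_num : (0:ℝ) ≤ 2), sq_abs]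
  -- change of variables τ = σ² u²
  have himg : (fun u : ℝ => σ^2 * u^2) '' Ioi 0 = Ioi 0 := by
    ext y
    constructor
    · rintro ⟨u, hu, rfl⟩
      exact mul_pos (pow_pos hσ 2) (pow_pos hu 2)
    · intro hy
      have hy' : (0:ℝ) < y := hy
      refine ⟨Real.sqrt y / σ, div_pos (Real.sqrt_pos.2 hy') hσ, ?_⟩
      simp only [div_pow, Real.sq_sqrt hy'.le]
      field_simp
  have hder : ∀ u ∈ Ioi (0:ℝ),
      HasDerivWithinAt (fun u : ℝ => σ^2 * u^2) (σ^2 * (2*u)) (Ioi 0) u := by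
    intro u hu
    have h := ((hasDerivAt_pow 2 u).const_mul (σ^2)).hasDerivWithinAt (s := Ioi 0)
    simpa using h
  have hinj : InjOn (fun u : ℝ => σ^2 * u^2) (Ioi 0) := by
    have : StrictMonoOn (fun u : ℝ => σ^2 * u^2) (Ioi 0) := by
      intro a ha b hb hab
      have ha' : (0:ℝ) < a := ha
      simp only
      have h2 := pow_pos hσ 2
      nlinarith [mul_pos h2 (mul_pos (add_pos ha' (lt_trans ha' hab)) (sub_pos.2 hab))]
    exact this.injOn
  have hcov := integral_image_eq_integral_abs_deriv_smul measurableSet_Ioi hder hinj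
    (fun τ => (Real.sqrt (2 * Real.pi * τ))⁻¹ * Real.exp (-e ^ 2 / (2 * τ)) *
      (σ ^ 2)⁻¹ * Real.exp (-τ / σ ^ 2))
  rw [himg] at hcov
  rw [hcov]
  have hpt : EqOn
      (fun u : ℝ => |σ^2 * (2*u)| • ((Real.sqrt (2 * Real.pi * (σ^2 * u^2)))⁻¹ *
        Real.exp (-e ^ 2 / (2 * (σ^2 * u^2))) * (σ ^ 2)⁻¹ *
        Real.exp (-(σ^2 * u^2) / σ ^ 2)))
      (fun u : ℝ => (2 / (Real.sqrt (2*π) * σ)) * Real.exp (-u^2 - c^2/u^2)) (Ioi 0) := by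
    intro u hu
    have hu' : (0:ℝ) < u := hu
    have habs : |σ^2 * (2*u)| = 2 * σ^2 * u := by
      rw [abs_of_pos (by positivity)]; ring
    have hsqrt : Real.sqrt (2 * Real.pi * (σ^2 * u^2)) = Real.sqrt (2*π) * (σ * u) := by
      rw [show 2 * Real.pi * (σ^2 * u^2) = (2*π) * (σ*u)^2 by ring,
        Real.sqrt_mul (by positivity), Real.sqrt_sq (by positivity)]
    have hexp1 : -e ^ 2 / (2 * (σ^2 * u^2)) = -(c^2/u^2) := by
      rw [hc2]; ring
    have hexp2 : -(σ^2 * u^2) / σ ^ 2 = -u^2 := by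
      field_simp
    simp only [smul_eq_mul, habs, hsqrt, hexp1, hexp2]
    rw [show -u^2 - c^2/u^2 = -u^2 + -(c^2/u^2) by ring, Real.exp_add]
    have hne : Real.sqrt (2*π) * (σ * u) ≠ 0 := by positivity
    field_simp
  rw [setIntegral_congr_fun measurableSet_Ioi hpt, MeasureTheory.integral_const_mul,
    key c hc]
  -- now pure algebra
  have hpi : (0:ℝ) < Real.sqrt π := Real.sqrt_pos.2 Real.pi_pos
  have hsqrt2pi : Real.sqrt (2*π) = Real.sqrt 2 * Real.sqrt π :=
    Real.sqrt_mul (by norm_num) _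
  have hexp : -(Real.sqrt 2 * |e|) / σ = -(2*c) := by
    rw [hcdef]
    rw [div_eq_iff (ne_of_gt hσ)] at *
    field_simp
    rw [Real.sq_sqrt (by norm_num : (0:ℝ) ≤ 2)]
    ring
  rw [hexp, hsqrt2pi]
  rw [div_mul_eq_mul_div, mul_comm]
  field_simp
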